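/- arXiv:2409.01333 — 6 statements merged into one kernel-verified Lean document; each statement's English description precedes it below -/
import Mathlib

section
/- Let n ≥ 3 be an integer and define a_i := 2^{n+1} + Σ_{j=1}^{i} (-1)^{n+2-j} 2^{j-1} for i = 0, …, n+1, and d := 3·2^{n+1} + (-1)^{n+1}. Then the only tuples (e_0, …, e_{n+1}) of nonnegative integers satisfying e_0 a_0 + e_1 a_1 + ⋯ + e_{n+1} a_{n+1} = d are the exponent vectors of the monomials x_i^2 x_{i+1} for i = 0, …, n (i.e., e_i = 2, e_{i+1} = 1, all other entries 0) and of the monomial x_{n+1}^3 x_0 (i.e., e_{n+1} = 3, e_0 = 1, all other entries 0). -/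
open Finset

lemma sum_eq_one_extract {α : Type*} [DecidableEq α] (s : Finset α) (f : α → ℕ)
    (h : ∑ x ∈ s, f x = 1) :
    ∃ j ∈ s, f j = 1 ∧ ∀ k ∈ s, k ≠ j → f k = 0 := by
  obtain ⟨j, hj, hfj⟩ := Finset.exists_ne_zero_of_sum_ne_zero (by omega : ∑ x ∈ s, f x ≠ 0)
  have hsplit := Finset.add_sum_erase s f hj
  have h0 : ∑ x ∈ s.erase j, f x = 0 := by omega
  refine ⟨j, hj, by omega, fun k hk hkj => ?_⟩
  exact (Finset.sum_eq_zero_iff.mp h0) k (Finset.mem_erase.mpr ⟨hkj, hk⟩)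

lemma neg_one_pow_closed (n : ℕ) : ∀ k, k ≤ n+1 →
    3 * ∑ j ∈ Finset.Icc 1 k, (-1:ℤ)^(n+2-j)*2^(j-1) = (-1)^(n+1) * (1 - (-2)^k) := by
  intro k
  induction k with
  | zero => intro _; simp
  | succ k ih =>
    intro hk
    rw [Finset.sum_Icc_succ_top (by omega : 1 ≤ k+1), mul_add, ih (by omega)]
    have hC : (-1:ℤ)^k * (-1)^k = 1 := by
      rw [← pow_add]; exact Even.neg_one_pow ⟨k, rfl⟩
    have h1 : (-1:ℤ)^(n+1-k) * (-1)^k = (-1)^(n+1) := by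
      rw [← pow_add]
      have : n+1-k+k = n+1 := by omega
      rw [this]
    have hB' : (-1:ℤ)^(n+1-k) = (-1)^(n+1) * (-1)^k := by
      calc (-1:ℤ)^(n+1-k) = ((-1)^(n+1-k) * (-1)^k) * (-1)^k - (-1)^(n+1-k)*((-1)^k*(-1)^k - 1) := by ring
      _ = (-1)^(n+1) * (-1)^k := by rw [h1, hC]; ring
    have h3 : ((-2:ℤ))^k = (-1)^k * 2^k := by rw [neg_pow]
    have hnk : n+2-(k+1) = n+1-k := by omega
    rw [hnk, hB']
    simp only [Nat.add_sub_cancel, pow_succ]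
    simp only [h3]
    ring_nf

set_option maxHeartbeats 2000000 in
/-- For `n ≥ 3`, with weights
`a_i = 2^(n+1) + ∑_{j=1}^{i} (-1)^(n+2-j) 2^(j-1)` (for `i = 0, …, n+1`) and degree
`d = 3·2^(n+1) + (-1)^(n+1)`, the only tuples `(e_0, …, e_{n+1})` of nonnegative integers
with `∑ e_i a_i = d` are the exponent vectors of the monomials `x_i^2 x_{i+1}`
(`i = 0, …, n`) and of `x_{n+1}^3 x_0`. -/
theorem loop_weights_only_monomials
    (n : ℕ) (hn : 3 ≤ n)
    (a : Fin (n + 2) → ℤ)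
    (ha : ∀ i : Fin (n + 2),
      a i = 2 ^ (n + 1) + ∑ j ∈ Finset.Icc 1 (i : ℕ), (-1 : ℤ) ^ (n + 2 - j) * 2 ^ (j - 1))
    (d : ℤ) (hd : d = 3 * 2 ^ (n + 1) + (-1 : ℤ) ^ (n + 1))
    (e : Fin (n + 2) → ℕ) :
    (∑ i, (e i : ℤ) * a i = d) ↔
      ((∃ i : Fin (n + 1),
          e = fun j => if j = i.castSucc then 2 else if j = i.succ then 1 else 0) ∨
        e = fun j => if j = Fin.last (n + 1) then 3 else if j = 0 then 1 else 0) := by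
  set s : ℤ := (-1)^(n+1) with hsdef
  set q : ℤ := (-2)^(n+1) with hqdef
  have hs2 : s * s = 1 := by
    rw [hsdef, ← pow_add]; exact Even.neg_one_pow ⟨n+1, rfl⟩
  have hq : q = s * 2^(n+1) := by rw [hqdef, hsdef, neg_pow]
  have hP : (16:ℤ) ≤ 2^(n+1) := by
    calc (16:ℤ) = 2^4 := by norm_num
    _ ≤ 2^(n+1) := pow_le_pow_right₀ (by norm_num) (by omega)
  have h3a : ∀ i : Fin (n+2), 3 * a i = 3*2^(n+1) + s * (1 - (-2)^(i:ℕ)) := by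
    intro i
    rw [ha i, mul_add, neg_one_pow_closed n (i:ℕ) (by omega)]
  constructor
  · intro hsum
    set T : ℤ := ∑ i, (e i : ℤ) * (-2)^((i:ℕ)) with hTdef
    set En : ℕ := ∑ i, e i with hEndef
    have hE : (∑ i, (e i : ℤ)) = (En : ℤ) := by rw [hEndef]; push_cast; ring
    have hcalc : 3 * (∑ i, (e i:ℤ) * a i) = 3*2^(n+1) * (En:ℤ) + s * ((En:ℤ) - T) := by
      rw [Finset.mul_sum]
      rw [Finset.sum_congr rfl (fun i _ => by
        linear_combination (e i:ℤ) * h3a i :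
        ∀ i ∈ univ, 3*((e i:ℤ) * a i)
          = (e i:ℤ)*(3*2^(n+1)) + s*((e i:ℤ) - (e i:ℤ)*(-2)^((i:ℕ))))]
      rw [Finset.sum_add_distrib, ← Finset.sum_mul, ← Finset.mul_sum,
        Finset.sum_sub_distrib, ← hTdef, hE]
      ring
    have h0 : 3*2^(n+1)*(En:ℤ) + s*((En:ℤ) - T) = 9*2^(n+1) + 3*s := by
      rw [← hcalc, hsum, hd]; ring
    have hkey : T = ((En:ℤ) - 3) * (1 + 3*q) := by
      linear_combination (-s) * h0 + ((En:ℤ) - T - 3) * hs2 + (9 - 3*(En:ℤ)) * hq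
    have hTb : |T| ≤ (En:ℤ) * 2^(n+1) := by
      calc |T| ≤ ∑ i, |(e i:ℤ)*(-2)^((i:ℕ))| := Finset.abs_sum_le_sum_abs _ _
      _ = ∑ i, (e i:ℤ)*2^((i:ℕ)) := by
          refine Finset.sum_congr rfl (fun i _ => ?_)
          rw [abs_mul, abs_pow]
          simp
      _ ≤ ∑ i, (e i:ℤ)*2^(n+1) := by
          refine Finset.sum_le_sum (fun i _ => ?_)
          have : (2:ℤ)^((i:ℕ)) ≤ 2^(n+1) := pow_le_pow_right₀ (by norm_num) (by omega)
          exact mul_le_mul_of_nonneg_left this (by positivity)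
      _ = (En:ℤ) * 2^(n+1) := by rw [← Finset.sum_mul, hE]
    have hs1 : s = 1 ∨ s = -1 := by
      rcases Nat.even_or_odd (n+1) with h | h
      · exact Or.inl (Even.neg_one_pow h)
      · exact Or.inr (Odd.neg_one_pow h)
    have hE34 : En = 3 ∨ En = 4 := by
      by_contra hne
      push_neg at hne
      have h5 : (En:ℤ) ≤ 2 ∨ 5 ≤ (En:ℤ) := by
        have : En ≤ 2 ∨ 5 ≤ En := by omega
        rcases this with h | h
        · exact Or.inl (by exact_mod_cast h)
        · exact Or.inr (by exact_mod_cast h)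
      have hEnn : (0:ℤ) ≤ (En:ℤ) := Int.natCast_nonneg _
      have habs := abs_le.mp hTb
      rcases hs1 with h1 | h1 <;> rw [h1] at hq <;> rcases h5 with h2 | h2
      · nlinarith [habs.1, hkey, mul_nonneg (by linarith : (0:ℤ) ≤ 2 - (En:ℤ)) (by linarith : (0:ℤ) ≤ 3*2^(n+1)+1)]
      · nlinarith [habs.2, hkey, mul_nonneg (by linarith : (0:ℤ) ≤ (En:ℤ) - 5) (by linarith : (0:ℤ) ≤ 2*2^(n+1)-1)]
      · nlinarith [habs.2, hkey, mul_nonneg (by linarith : (0:ℤ) ≤ 2 - (En:ℤ)) (by linarith : (0:ℤ) ≤ 3*2^(n+1)-1)]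
      · nlinarith [habs.1, hkey, mul_nonneg (by linarith : (0:ℤ) ≤ (En:ℤ) - 5) (by linarith : (0:ℤ) ≤ 2*2^(n+1)-1)]
    rcases hE34 with hEn | hEn
    · -- En = 3 : loop monomial case
      have hT0 : T = 0 := by rw [hkey, hEn]; push_cast; ring
      have hsum_ne : ∑ i, e i ≠ 0 := by rw [← hEndef, hEn]; omega
      obtain ⟨i₀, hi₀, hmin⟩ :
          ∃ i₀ : Fin (n+2), e i₀ ≠ 0 ∧ ∀ j, e j ≠ 0 → i₀ ≤ j := by
        classical
        obtain ⟨w, -, hw⟩ := Finset.exists_ne_zero_of_sum_ne_zero hsum_ne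
        have hSne : (univ.filter (fun i => e i ≠ 0)).Nonempty :=
          ⟨w, Finset.mem_filter.mpr ⟨Finset.mem_univ _, hw⟩⟩
        refine ⟨(univ.filter (fun i => e i ≠ 0)).min' hSne,
          (Finset.mem_filter.mp (Finset.min'_mem _ hSne)).2, fun j h => ?_⟩
        exact Finset.min'_le _ j (Finset.mem_filter.mpr ⟨Finset.mem_univ _, h⟩)
      have hsplit : T = (e i₀:ℤ)*(-2)^((i₀:ℕ)) +
          ∑ j ∈ univ.erase i₀, (e j:ℤ)*(-2)^((j:ℕ)) := by
        rw [hTdef, ← Finset.add_sum_erase univ _ (Finset.mem_univ i₀)]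
      have hdvd : (2:ℤ)^((i₀:ℕ)+1) ∣ ∑ j ∈ univ.erase i₀, (e j:ℤ)*(-2)^((j:ℕ)) := by
        refine Finset.dvd_sum (fun j hj => ?_)
        by_cases he : e j = 0
        · simp [he]
        · have hne : j ≠ i₀ := (Finset.mem_erase.mp hj).1
          have hlt' : i₀ < j := lt_of_le_of_ne (hmin j he) (Ne.symm hne)
          have hlt : (i₀:ℕ) < (j:ℕ) := hlt'

          refine Dvd.dvd.mul_left ?_ _
          calc (2:ℤ)^((i₀:ℕ)+1) ∣ 2^((j:ℕ)) := pow_dvd_pow 2 (by omega)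
          _ ∣ (-2)^((j:ℕ)) := by rw [neg_pow]; exact dvd_mul_left _ _
      have hdvd0 : (2:ℤ)^((i₀:ℕ)+1) ∣ (e i₀:ℤ)*(-2)^((i₀:ℕ)) := by
        have heq : (e i₀:ℤ)*(-2)^((i₀:ℕ)) = -(∑ j ∈ univ.erase i₀, (e j:ℤ)*(-2)^((j:ℕ))) := by
          have h := hsplit
          rw [hT0] at h
          linarith
        rw [heq]
        exact dvd_neg.mpr hdvd
      have h2dvd : 2 ∣ e i₀ := by
        have hC : (-1:ℤ)^((i₀:ℕ)) * (-1)^((i₀:ℕ)) = 1 := by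
          rw [← pow_add]; exact Even.neg_one_pow ⟨(i₀:ℕ), rfl⟩
        have h1 : (2:ℤ) * 2^((i₀:ℕ)) ∣ ((e i₀:ℤ)*(-1)^((i₀:ℕ))) * 2^((i₀:ℕ)) := by
          have h := hdvd0
          have he' : (e i₀:ℤ)*(-2)^((i₀:ℕ)) = (e i₀:ℤ)*(-1)^((i₀:ℕ)) * 2^((i₀:ℕ)) := by
            rw [neg_pow]; ring
          have hps : (2:ℤ)^((i₀:ℕ)+1) = 2*2^((i₀:ℕ)) := by ring
          rwa [he', hps] at h
        have h2 : (2:ℤ) ∣ (e i₀:ℤ)*(-1)^((i₀:ℕ)) :=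
          (mul_dvd_mul_iff_right (pow_ne_zero _ (two_ne_zero))).mp h1
        have h3 : (2:ℤ) ∣ (e i₀:ℤ) := by
          have := Dvd.dvd.mul_right h2 ((-1:ℤ)^((i₀:ℕ)))
          rwa [mul_assoc, hC, mul_one] at this
        exact_mod_cast h3
      have he_le : e i₀ ≤ 3 := by
        have := Finset.single_le_sum (f := e) (fun i _ => Nat.zero_le _) (Finset.mem_univ i₀)
        omega
      have he2 : e i₀ = 2 := by omega
      have hrest : ∑ j ∈ univ.erase i₀, e j = 1 := by
        have := Finset.add_sum_erase univ e (Finset.mem_univ i₀)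
        omega
      obtain ⟨j₀, hj₀mem, hej₀, hz⟩ := sum_eq_one_extract _ _ hrest
      have hj₀ne : j₀ ≠ i₀ := (Finset.mem_erase.mp hj₀mem).1
      have hT2 : (0:ℤ) = 2*(-2)^((i₀:ℕ)) + (-2)^((j₀:ℕ)) := by
        have hz2 : ∑ k ∈ (univ.erase i₀).erase j₀, (e k:ℤ)*(-2)^((k:ℕ)) = 0 :=
          Finset.sum_eq_zero (fun k hk => by
            rw [hz k (Finset.mem_erase.mp hk).2 (Finset.mem_erase.mp hk).1]
            simp)
        have h4 := Finset.add_sum_erase (univ.erase i₀) (fun j => (e j:ℤ)*(-2)^((j:ℕ))) hj₀mem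
        rw [hz2, add_zero] at h4
        have h5 : (e j₀:ℤ)*(-2)^((j₀:ℕ)) = ∑ j ∈ univ.erase i₀, (e j:ℤ)*(-2)^((j:ℕ)) := h4
        rw [← hT0, hsplit, ← h5, he2, hej₀]
        push_cast
        ring
      have hpowe : ((-2:ℤ))^((j₀:ℕ)) = (-2)^((i₀:ℕ)+1) := by
        rw [pow_succ]
        linarith [hT2]
      have hpow2 : (2:ℤ)^((j₀:ℕ)) = 2^((i₀:ℕ)+1) := by
        have h := congrArg (fun z => |z|) hpowe
        simpa [abs_pow] using h
      have hj₀val : (j₀:ℕ) = (i₀:ℕ)+1 := by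
        refine Nat.pow_right_injective (le_refl 2) ?_
        exact_mod_cast hpow2
      have hi₀n : (i₀:ℕ) ≤ n := by
        have := j₀.isLt
        omega
      refine Or.inl ⟨⟨(i₀:ℕ), by omega⟩, ?_⟩
      have hc1 : Fin.castSucc (⟨(i₀:ℕ), by omega⟩ : Fin (n+1)) = i₀ := by
        apply Fin.ext
        simp
      have hc2 : Fin.succ (⟨(i₀:ℕ), by omega⟩ : Fin (n+1)) = j₀ := by
        apply Fin.ext
        simp [hj₀val]
      funext j
      rw [hc1, hc2]
      by_cases h1 : j = i₀
      · simp [h1, he2]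
      · by_cases h2 : j = j₀
        · subst h2
          simp [hj₀ne, hej₀]
        · simp only [h1, h2, if_false]
          exact hz j (Finset.mem_erase.mpr ⟨h1, Finset.mem_univ _⟩) h2
    · -- En = 4 : x_{n+1}^3 x_0 case
      have hT4 : T = 1 + 3*q := by rw [hkey, hEn]; push_cast; ring
      have hqeven : (2:ℤ) ∣ q := by
        rw [hqdef, pow_succ]
        exact Dvd.dvd.mul_left ⟨-1, by ring⟩ _
      have hTodd : ¬ (2:ℤ) ∣ T := by
        obtain ⟨c, hc⟩ := hqeven
        rintro ⟨m, hm⟩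
        rw [hT4, hc] at hm
        omega
      have hval0 : ((0 : Fin (n+2)) : ℕ) = 0 := rfl
      have hsplit0 : T = (e 0:ℤ) +
          ∑ j ∈ univ.erase (0 : Fin (n+2)), (e j:ℤ)*(-2)^((j:ℕ)) := by
        rw [hTdef, ← Finset.add_sum_erase univ _ (Finset.mem_univ (0 : Fin (n+2))), hval0]
        ring
      have hdvd0 : (2:ℤ) ∣ ∑ j ∈ univ.erase (0 : Fin (n+2)), (e j:ℤ)*(-2)^((j:ℕ)) := by
        refine Finset.dvd_sum (fun j hj => ?_)
        have hjne : j ≠ 0 := (Finset.mem_erase.mp hj).1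
        have hjval : (j:ℕ) ≠ 0 := fun h => hjne (Fin.ext (by simp [h]))
        obtain ⟨m, hm⟩ : ∃ m, (j:ℕ) = m + 1 := ⟨(j:ℕ) - 1, by omega⟩
        refine Dvd.dvd.mul_left ?_ _
        rw [hm, pow_succ]
        exact Dvd.dvd.mul_left ⟨-1, by ring⟩ _
      have he0odd : ¬ 2 ∣ e 0 := by
        intro h
        refine hTodd ?_
        rw [hsplit0]
        exact dvd_add (by exact_mod_cast Int.natCast_dvd_natCast.mpr h) hdvd0
      have he0le : e 0 ≤ 4 := by
        have := Finset.single_le_sum (f := e) (fun i _ => Nat.zero_le _)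
          (Finset.mem_univ (0 : Fin (n+2)))
        omega
      have habsq : |q| = 2^(n+1) := by rw [hqdef, abs_pow]; norm_num
      have he013 : e 0 = 1 ∨ e 0 = 3 := by omega
      rcases he013 with he0 | he0
      · -- e 0 = 1, the genuine case
        have hrs : ∑ j ∈ univ.erase (0 : Fin (n+2)), (e j:ℤ)*(-2)^((j:ℕ)) = 3*q := by
          have h := hsplit0
          rw [hT4, he0] at h
          push_cast at h
          linarith
        have hcnt : ∑ j ∈ univ.erase (0 : Fin (n+2)), e j = 3 := by
          have := Finset.add_sum_erase univ e (Finset.mem_univ (0 : Fin (n+2)))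
          omega
        have habs : 3*2^(n+1) ≤ ∑ j ∈ univ.erase (0 : Fin (n+2)), (e j:ℤ)*2^((j:ℕ)) := by
          calc (3:ℤ)*2^(n+1) = |3*q| := by rw [abs_mul, habsq]; norm_num
          _ = |∑ j ∈ univ.erase (0 : Fin (n+2)), (e j:ℤ)*(-2)^((j:ℕ))| := by rw [hrs]
          _ ≤ ∑ j ∈ univ.erase (0 : Fin (n+2)), |(e j:ℤ)*(-2)^((j:ℕ))| :=
              Finset.abs_sum_le_sum_abs _ _
          _ = ∑ j ∈ univ.erase (0 : Fin (n+2)), (e j:ℤ)*2^((j:ℕ)) := by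
              refine Finset.sum_congr rfl (fun i _ => ?_)
              rw [abs_mul, abs_pow]
              simp
        have hub : ∑ j ∈ univ.erase (0 : Fin (n+2)), (e j:ℤ)*2^((j:ℕ))
            ≤ ∑ j ∈ univ.erase (0 : Fin (n+2)), (e j:ℤ)*2^(n+1) := by
          refine Finset.sum_le_sum (fun i _ => ?_)
          have : (2:ℤ)^((i:ℕ)) ≤ 2^(n+1) := pow_le_pow_right₀ (by norm_num) (by omega)
          exact mul_le_mul_of_nonneg_left this (by positivity)
        have hub2 : ∑ j ∈ univ.erase (0 : Fin (n+2)), (e j:ℤ)*2^(n+1) = 3*2^(n+1) := by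
          rw [← Finset.sum_mul]
          rw [show ∑ j ∈ univ.erase (0 : Fin (n+2)), (e j:ℤ) = ((∑ j ∈ univ.erase (0 : Fin (n+2)), e j : ℕ) : ℤ) by push_cast; ring, hcnt]
          norm_num
        have heq3 : ∑ j ∈ univ.erase (0 : Fin (n+2)), (e j:ℤ)*2^((j:ℕ)) = 3*2^(n+1) :=
          le_antisymm (by linarith) habs
        have hzero : ∀ j ∈ univ.erase (0 : Fin (n+2)), (e j:ℤ)*(2^(n+1) - 2^((j:ℕ))) = 0 := by
          have hsz : ∑ j ∈ univ.erase (0 : Fin (n+2)), (e j:ℤ)*(2^(n+1) - 2^((j:ℕ))) = 0 := by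
            have hexp : ∑ j ∈ univ.erase (0 : Fin (n+2)), (e j:ℤ)*(2^(n+1) - 2^((j:ℕ)))
                = ∑ j ∈ univ.erase (0 : Fin (n+2)), ((e j:ℤ)*2^(n+1) - (e j:ℤ)*2^((j:ℕ))) :=
              Finset.sum_congr rfl (fun j _ => by ring)
            rw [hexp, Finset.sum_sub_distrib, hub2, heq3]
            ring
          have hnonneg : ∀ i ∈ univ.erase (0 : Fin (n+2)),
              (0:ℤ) ≤ (e i:ℤ)*(2^(n+1) - 2^((i:ℕ))) := by
            intro i _
            have h1 : (2:ℤ)^((i:ℕ)) ≤ 2^(n+1) := pow_le_pow_right₀ (by norm_num) (by omega)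
            exact mul_nonneg (by positivity) (by linarith)
          intro j hj
          exact (Finset.sum_eq_zero_iff_of_nonneg hnonneg).mp hsz j hj
        have hzz : ∀ j : Fin (n+2), j ≠ 0 → j ≠ Fin.last (n+1) → e j = 0 := by
          intro j hj0 hjl
          have hj : j ∈ univ.erase (0 : Fin (n+2)) := Finset.mem_erase.mpr ⟨hj0, Finset.mem_univ _⟩
          have := hzero j hj
          rcases mul_eq_zero.mp this with h | h
          · exact_mod_cast h
          · exfalso
            have hpe : (2:ℤ)^((j:ℕ)) = 2^(n+1) := by linarith
            have hjv : (j:ℕ) = n+1 := Nat.pow_right_injective (le_refl 2) (by exact_mod_cast hpe)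
            exact hjl (Fin.ext (by simp [hjv]))
        have hlast0 : Fin.last (n+1) ≠ (0 : Fin (n+2)) := by
          intro h
          have := congrArg (fun z : Fin (n+2) => (z:ℕ)) h
          simp at this
        have hel : e (Fin.last (n+1)) = 3 := by
          have hmem : Fin.last (n+1) ∈ univ.erase (0 : Fin (n+2)) :=
            Finset.mem_erase.mpr ⟨hlast0, Finset.mem_univ _⟩
          have h4 := Finset.add_sum_erase (univ.erase (0 : Fin (n+2))) e hmem
          have hz5 : ∑ k ∈ (univ.erase (0 : Fin (n+2))).erase (Fin.last (n+1)), e k = 0 :=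
            Finset.sum_eq_zero (fun k hk =>
              hzz k (Finset.mem_erase.mp (Finset.mem_erase.mp hk).2).1 (Finset.mem_erase.mp hk).1)
          omega
        refine Or.inr ?_
        funext j
        by_cases h1 : j = Fin.last (n+1)
        · simp [h1, hel]
        · by_cases h2 : j = 0
          · subst h2
            simp [Ne.symm hlast0, he0, h1]
          · simp only [h1, h2, if_false]
            exact hzz j h2 h1
      · -- e 0 = 3 : impossible
        exfalso
        have hrest : ∑ j ∈ univ.erase (0 : Fin (n+2)), e j = 1 := by
          have := Finset.add_sum_erase univ e (Finset.mem_univ (0 : Fin (n+2)))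
          omega
        obtain ⟨j₀, hj₀mem, hej₀, hz⟩ := sum_eq_one_extract _ _ hrest
        have hT2 : T = 3 + (-2)^((j₀:ℕ)) := by
          have hz2 : ∑ k ∈ (univ.erase (0:Fin (n+2))).erase j₀, (e k:ℤ)*(-2)^((k:ℕ)) = 0 :=
            Finset.sum_eq_zero (fun k hk => by
              rw [hz k (Finset.mem_erase.mp hk).2 (Finset.mem_erase.mp hk).1]
              simp)
          have h4 := Finset.add_sum_erase (univ.erase (0:Fin (n+2)))
            (fun j => (e j:ℤ)*(-2)^((j:ℕ))) hj₀mem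
          rw [hz2, add_zero] at h4
          have h5 : (e j₀:ℤ)*(-2)^((j₀:ℕ)) =
              ∑ j ∈ univ.erase (0:Fin (n+2)), (e j:ℤ)*(-2)^((j:ℕ)) := h4
          rw [hsplit0, ← h5, he0, hej₀]
          push_cast
          ring
        have h6 : ((-2:ℤ))^((j₀:ℕ)) = 3*q - 2 := by
          rw [hT4] at hT2
          linarith
        have h7 : |((-2:ℤ))^((j₀:ℕ))| = 2^((j₀:ℕ)) := by rw [abs_pow]; norm_num
        have h8 : (2:ℤ)^((j₀:ℕ)) ≤ 2^(n+1) := pow_le_pow_right₀ (by norm_num) (by omega)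
        have h9 : 3*2^(n+1) - 2 ≤ |3*q - 2| := by
          have h10 : |3*q| - |(2:ℤ)| ≤ |3*q - 2| := abs_sub_abs_le_abs_sub _ _
          rw [abs_mul, habsq] at h10
          simp at h10
          linarith
        rw [← h6, h7] at h9
        linarith
  · rintro (⟨i, rfl⟩ | rfl)
    · -- loop monomial x_i^2 x_{i+1}
      have hne : i.castSucc ≠ i.succ := (Fin.castSucc_lt_succ (i := i)).ne
      have hsum2 : ∑ j : Fin (n+2),
          (((if j = i.castSucc then 2 else if j = i.succ then 1 else 0 : ℕ)):ℤ) * a j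
          = 2 * a i.castSucc + a i.succ := by
        have hterm : ∀ j : Fin (n+2),
            (((if j = i.castSucc then 2 else if j = i.succ then 1 else 0 : ℕ)):ℤ) * a j
            = (if j = i.castSucc then 2 * a j else 0) + (if j = i.succ then a j else 0) := by
          intro j
          by_cases h1 : j = i.castSucc
          · subst h1
            simp [hne]
          · by_cases h2 : j = i.succ <;> simp [h1, h2, Ne.symm hne]
        rw [Finset.sum_congr rfl (fun j _ => hterm j), Finset.sum_add_distrib,
          Finset.sum_ite_eq' univ i.castSucc, Finset.sum_ite_eq' univ i.succ]
        simp
      rw [hsum2]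
      have h1 := h3a i.castSucc
      have h2 := h3a i.succ
      rw [Fin.coe_castSucc] at h1
      rw [Fin.val_succ] at h2
      have h3 : 3 * (2 * a i.castSucc + a i.succ) = 3 * d := by
        rw [hd]
        linear_combination 2*h1 + h2
      linarith
    · -- the monomial x_{n+1}^3 x_0
      have hne : Fin.last (n+1) ≠ (0 : Fin (n+2)) := by
        intro h
        have := congrArg (fun z : Fin (n+2) => (z:ℕ)) h
        simp at this
      have hsum2 : ∑ j : Fin (n+2),
          (((if j = Fin.last (n+1) then 3 else if j = 0 then 1 else 0 : ℕ)):ℤ) * a j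
          = 3 * a (Fin.last (n+1)) + a 0 := by
        have hterm : ∀ j : Fin (n+2),
            (((if j = Fin.last (n+1) then 3 else if j = 0 then 1 else 0 : ℕ)):ℤ) * a j
            = (if j = Fin.last (n+1) then 3 * a j else 0) + (if j = 0 then a j else 0) := by
          intro j
          by_cases h1 : j = Fin.last (n+1)
          · subst h1
            simp [hne]
          · by_cases h2 : j = 0 <;> simp [h1, h2, Ne.symm hne]
        rw [Finset.sum_congr rfl (fun j _ => hterm j), Finset.sum_add_distrib,
          Finset.sum_ite_eq' univ (Fin.last (n+1)), Finset.sum_ite_eq' univ (0 : Fin (n+2))]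
        simp
      rw [hsum2]
      have h1 := h3a (Fin.last (n+1))
      have h2 := h3a (0 : Fin (n+2))
      rw [Fin.val_last] at h1
      rw [show (((0 : Fin (n+2))):ℕ) = 0 from rfl] at h2
      have hq' : ((-2:ℤ))^(n+1) = s * 2^(n+1) := by rw [hsdef, neg_pow]
      have hu : ((-1:ℤ))^(n*2) = 1 := by rw [pow_mul']; norm_num
      have h3 : 3 * (3 * a (Fin.last (n+1)) + a 0) = 3 * d := by
        rw [hd]
        linear_combination 3*h1 + h2 + (-3*s)*hq' + (3*2^(n+1))*hs2 + (-12*2^n)*hu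
      linarith
end

section
/- Let n ≥ 3 be an integer and define a_i := 2^{n+1} + Σ_{j=1}^{i} (-1)^{n+2-j} 2^{j-1} for i = 0, …, n+1. Then the set of weights {a_0, …, a_{n+1}} is well-formed: for every index i, the greatest common divisor of the n+1 integers {a_j : j ≠ i} equals 1. In particular gcd(a_0, …, a_{n+1}) = 1 and |a_1 − a_0| = 1. -/
lemma gcd_erase_one {m : ℕ} (s : Finset (Fin m)) (a : Fin m → ℤ)
    (p q : Fin m) (hp : p ∈ s) (hq : q ∈ s)
    (h : a q - a p = 1 ∨ a q - a p = -1) : s.gcd a = 1 := by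
  have hd1 : Finset.gcd s a ∣ (1 : ℤ) := by
    have h1 : Finset.gcd s a ∣ a p := Finset.gcd_dvd hp
    have h2 : Finset.gcd s a ∣ a q := Finset.gcd_dvd hq
    have hdiff : Finset.gcd s a ∣ a q - a p := dvd_sub h2 h1
    rcases h with h | h
    · rwa [h] at hdiff
    · rw [h] at hdiff; exact (dvd_neg).mp hdiff
  exact Int.eq_one_of_dvd_one
    (Int.nonneg_of_normalize_eq_self Finset.normalize_gcd) hd1

/-- For `n ≥ 3`, the weights `a_i = 2^(n+1) + ∑_{j=1}^{i} (-1)^(n+2-j) 2^(j-1)`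
form a well-formed set: omitting any single weight, the gcd of the remaining ones is `1`.
In particular `gcd(a_0, …, a_{n+1}) = 1` and `|a_1 - a_0| = 1`. -/
theorem loop_weights_well_formed
    (n : ℕ) (hn : 3 ≤ n)
    (a : Fin (n + 2) → ℤ)
    (ha : ∀ i : Fin (n + 2),
      a i = 2 ^ (n + 1) + ∑ j ∈ Finset.Icc 1 (i : ℕ), (-1 : ℤ) ^ (n + 2 - j) * 2 ^ (j - 1)) :
    (∀ i : Fin (n + 2), Finset.gcd (Finset.univ.erase i) a = 1) ∧
    Finset.gcd Finset.univ a = 1 ∧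
    |a 1 - a 0| = 1 := by
  have h0lt : 0 < n + 2 := by omega
  have h1lt : 1 < n + 2 := by omega
  have h2lt : 2 < n + 2 := by omega
  set p0 : Fin (n + 2) := ⟨0, h0lt⟩ with hp0
  set p1 : Fin (n + 2) := ⟨1, h1lt⟩ with hp1
  set p2 : Fin (n + 2) := ⟨2, h2lt⟩ with hp2
  have h0 : a p0 = 2 ^ (n + 1) := by
    rw [ha]; simp [hp0]
  have h1 : a p1 = 2 ^ (n + 1) + (-1) ^ (n + 1) := by
    rw [ha]
    have e : ((p1 : Fin (n + 2)) : ℕ) = 1 := rfl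
    rw [e]
    have e2 : Finset.Icc 1 1 = ({1} : Finset ℕ) := rfl
    rw [e2, Finset.sum_singleton]
    norm_num
  have h2 : a p2 = 2 ^ (n + 1) + (-1) ^ (n + 1) + (-1) ^ n * 2 := by
    rw [ha]
    have e : ((p2 : Fin (n + 2)) : ℕ) = 2 := rfl
    rw [e]
    have e2 : Finset.Icc 1 2 = ({1, 2} : Finset ℕ) := rfl
    rw [e2, Finset.sum_insert (by decide), Finset.sum_singleton]
    have e3 : n + 2 - 1 = n + 1 := by omega
    have e4 : n + 2 - 2 = n := by omega
    rw [e3, e4]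
    ring
  have hd10 : a p1 - a p0 = 1 ∨ a p1 - a p0 = -1 := by
    rw [h0, h1]
    rcases Nat.even_or_odd (n + 1) with h | h
    · left; rw [h.neg_one_pow]; ring
    · right; rw [h.neg_one_pow]; ring
  have hd20 : a p2 - a p0 = 1 ∨ a p2 - a p0 = -1 := by
    rw [h0, h2]
    rcases Nat.even_or_odd n with h | h
    · left; rw [h.neg_one_pow, h.add_one.neg_one_pow]; ring
    · right; rw [h.neg_one_pow, h.add_one.neg_one_pow]; ring
  have hodd : ¬ (2 : ℤ) ∣ a p1 := by
    have h2n : (2 : ℤ) ^ (n + 1) = 2 * 2 ^ n := by ring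
    rw [h1, h2n]
    rcases Nat.even_or_odd (n + 1) with h | h
    · rw [h.neg_one_pow]; omega
    · rw [h.neg_one_pow]; omega
  have main : ∀ i : Fin (n + 2), Finset.gcd (Finset.univ.erase i) a = 1 := by
    intro i
    by_cases hi0 : i = p0
    · -- index 0 removed: use a p1 (odd) and a p2 with a p2 - a p1 = ±2
      have hm1 : p1 ∈ Finset.univ.erase i := by
        simp [Finset.mem_erase, hi0, hp0, hp1, Fin.ext_iff]
      have hm2 : p2 ∈ Finset.univ.erase i := by
        simp [Finset.mem_erase, hi0, hp0, hp2, Fin.ext_iff]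
      set d := Finset.gcd (Finset.univ.erase i) a with hd
      have hdp1 : d ∣ a p1 := Finset.gcd_dvd hm1
      have hdp2 : d ∣ a p2 := Finset.gcd_dvd hm2
      have hdiff : d ∣ (2 : ℤ) := by
        have hsub : d ∣ a p2 - a p1 := dvd_sub hdp2 hdp1
        have hval : a p2 - a p1 = (-1) ^ n * 2 := by rw [h1, h2]; ring
        rw [hval] at hsub
        rcases Nat.even_or_odd n with h | h
        · rwa [h.neg_one_pow, one_mul] at hsub
        · rw [h.neg_one_pow] at hsub
          have : (-1 : ℤ) * 2 = -2 := by norm_num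
          rw [this] at hsub
          exact (dvd_neg).mp hsub
      have hnn : (0 : ℤ) ≤ d :=
        Int.nonneg_of_normalize_eq_self Finset.normalize_gcd
      have hne : d ≠ 0 := by
        intro h
        rw [h] at hdp1
        exact hodd (by rw [zero_dvd_iff.mp hdp1]; exact dvd_zero 2)
      have hle : d ≤ 2 := Int.le_of_dvd (by norm_num) hdiff
      have hpos : 0 < d := lt_of_le_of_ne hnn (Ne.symm hne)
      interval_cases d
      · rfl
      · exact absurd hdp1 hodd
    · by_cases hi1 : i = p1
      · exact gcd_erase_one _ a p0 p2
          (by simp [Finset.mem_erase, hi1, hp0, hp1, Fin.ext_iff])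
          (by simp [Finset.mem_erase, hi1, hp1, hp2, Fin.ext_iff])
          hd20
      · exact gcd_erase_one _ a p0 p1
          (by simp [Finset.mem_erase, Ne.symm hi0])
          (by simp [Finset.mem_erase, Ne.symm hi1])
          hd10
  refine ⟨main, ?_, ?_⟩
  · exact gcd_erase_one _ a p0 p1 (Finset.mem_univ _) (Finset.mem_univ _) hd10
  · have e0 : (0 : Fin (n + 2)) = p0 := rfl
    have e1 : (1 : Fin (n + 2)) = p1 := by
      apply Fin.ext; simp [hp1, Fin.val_one]
    rw [e0, e1]
    rcases hd10 with h | h <;> rw [h] <;> norm_num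
end

section
/- Let n ≥ 3 be an integer and define a_i := 2^{n+1} + Σ_{j=1}^{i} (-1)^{n+2-j} 2^{j-1} for i = 0, …, n+1, and d := 3·2^{n+1} + (-1)^{n+1}. Then for every i = 0, …, n one has d < 4a_i and 2a_i < d; that is, all the weights except the last one, a_{n+1}, lie strictly between d/4 and d/2. Moreover d > 2a_i for every i = 0, …, n+1, i.e., the degree is more than twice every weight. -/
lemma loop_sum_closed (n : ℕ) : ∀ i : ℕ, i ≤ n + 1 →
    3 * ∑ j ∈ Finset.Icc 1 i, (-1 : ℤ) ^ (n + 2 - j) * 2 ^ (j - 1)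
      = (-1 : ℤ) ^ (n + 1) * (1 - (-2) ^ i) := by
  intro i
  induction i with
  | zero => simp
  | succ k ih =>
      intro hk
      have hk' : k ≤ n + 1 := by omega
      rw [Finset.sum_Icc_succ_top (by omega : 1 ≤ k + 1), mul_add, ih hk']
      have h1 : n + 2 - (k + 1) = n + 1 - k := by omega
      have h2 : k + 1 - 1 = k := by omega
      have h3 : ((-1 : ℤ) ^ (n + 1 - k)) * (-1) ^ k = (-1) ^ (n + 1) := by
        rw [← pow_add, Nat.sub_add_cancel (by omega : k ≤ n + 1)]
      have h4 : ((-1 : ℤ) ^ (n + 1 - k)) = (-1) ^ (n + 1) * (-1) ^ k := by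
        have hsq : ((-1 : ℤ) ^ k) * (-1) ^ k = 1 := by
          rw [← pow_add, ← two_mul, pow_mul]; norm_num
        rw [← h3, mul_assoc, hsq, mul_one]
      rw [h1, h2, h4]
      have : ((-2 : ℤ)) ^ (k + 1) = (-1) ^ (k + 1) * 2 ^ (k + 1) := by
        rw [← neg_one_mul, mul_pow]
      ring_nf
      rw [show ((-2 : ℤ)) ^ k = (-1) ^ k * 2 ^ k by rw [← neg_one_mul, mul_pow]]
      ring

/-- For `n ≥ 3`, with weights `a_i = 2^(n+1) + ∑_{j=1}^{i} (-1)^(n+2-j) 2^(j-1)`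
and degree `d = 3·2^(n+1) + (-1)^(n+1)`: for every `i = 0, …, n` one has `d < 4 a_i` and
`2 a_i < d` (the weights except the last lie strictly between `d/4` and `d/2`);
moreover `d > 2 a_i` for every `i = 0, …, n+1`. -/
theorem loop_weights_degree_bounds
    (n : ℕ) (hn : 3 ≤ n)
    (a : Fin (n + 2) → ℤ)
    (ha : ∀ i : Fin (n + 2),
      a i = 2 ^ (n + 1) + ∑ j ∈ Finset.Icc 1 (i : ℕ), (-1 : ℤ) ^ (n + 2 - j) * 2 ^ (j - 1))
    (d : ℤ) (hd : d = 3 * 2 ^ (n + 1) + (-1 : ℤ) ^ (n + 1)) :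
    (∀ i : Fin (n + 1), d < 4 * a i.castSucc ∧ 2 * a i.castSucc < d) ∧
    (∀ i : Fin (n + 2), 2 * a i < d) := by
  have he : |(-1 : ℤ) ^ (n + 1)| = 1 := by rw [abs_pow, abs_neg, abs_one, one_pow]
  have he1 : -1 ≤ (-1 : ℤ) ^ (n + 1) ∧ (-1 : ℤ) ^ (n + 1) ≤ 1 := abs_le.mp (le_of_eq he)
  have h2n : (8 : ℤ) ≤ 2 ^ n := by
    calc (8 : ℤ) = 2 ^ 3 := by norm_num
    _ ≤ 2 ^ n := pow_le_pow_right₀ (by norm_num) hn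
  have hpow1 : (2 : ℤ) ^ (n + 1) = 2 * 2 ^ n := by rw [pow_succ]; ring
  have key : ∀ i : ℕ, i ≤ n + 1 →
      |3 * ∑ j ∈ Finset.Icc 1 i, (-1 : ℤ) ^ (n + 2 - j) * 2 ^ (j - 1)| ≤ 1 + 2 ^ i := by
    intro i hi
    rw [loop_sum_closed n i hi, abs_mul, he, one_mul]
    calc |(1 : ℤ) - (-2) ^ i| ≤ |(1 : ℤ)| + |((-2 : ℤ)) ^ i| := abs_sub _ _
    _ = 1 + 2 ^ i := by rw [abs_one, abs_pow, abs_neg]; norm_num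
  refine ⟨fun i => ?_, fun i => ?_⟩
  · have hi : (i : ℕ) ≤ n := Nat.lt_succ_iff.mp i.isLt
    have hc : ((i.castSucc : Fin (n + 2)) : ℕ) = (i : ℕ) := rfl
    have hk := key (i : ℕ) (by omega)
    have hb := abs_le.mp hk
    have hp : (2 : ℤ) ^ (i : ℕ) ≤ 2 ^ n := pow_le_pow_right₀ (by norm_num) hi
    rw [ha, hc, hd]
    constructor <;> nlinarith [hb.1, hb.2, he1.1, he1.2]
  · have hi : (i : ℕ) ≤ n + 1 := Nat.lt_succ_iff.mp i.isLt
    have hk := key (i : ℕ) hi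
    have hb := abs_le.mp hk
    have hp : (2 : ℤ) ^ (i : ℕ) ≤ 2 ^ (n + 1) := pow_le_pow_right₀ (by norm_num) hi
    rw [ha, hd]
    nlinarith [hb.1, hb.2, he1.1, he1.2]
end

section
/- Let n ≥ 1 be an integer and let c_0, …, c_{n+1} be complex numbers. Consider the polynomial F = Σ_{i=0}^{n} c_i x_i^2 x_{i+1} + c_{n+1} x_{n+1}^3 x_0 in the variables x_0, …, x_{n+1}. Then the partial derivatives ∂F/∂x_0, …, ∂F/∂x_{n+1} have a common zero in ℂ^{n+2} ∖ {0} if and only if some coefficient c_i equals 0. Equivalently, the origin is the only common zero of the partial derivatives if and only if all c_i are nonzero. -/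
open MvPolynomial Finset in
private lemma eval_pderiv_loop (n : ℕ) (c x : Fin (n+2) → ℂ) (i : Fin (n+2)) :
    MvPolynomial.eval x (MvPolynomial.pderiv i
      ((∑ j : Fin (n + 1), C (c j.castSucc) * X j.castSucc ^ 2 * X j.succ)
        + C (c (Fin.last (n+1))) * X (Fin.last (n+1)) ^ 3 * X (0 : Fin (n+2)))) =
    (∑ j : Fin (n+1), c j.castSucc *
      ((if i = j.castSucc then 2 * x j.castSucc * x j.succ else 0)
        + (if i = j.succ then x j.castSucc ^ 2 else 0)))
    + c (Fin.last (n+1)) * ((if i = Fin.last (n+1) then 3 * x (Fin.last (n+1)) ^ 2 * x 0 else 0)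
        + (if i = 0 then x (Fin.last (n+1)) ^ 3 else 0)) := by
  have hls : (0 : Fin (n+2)) ≠ Fin.last (n+1) := by
    simp [Fin.ext_iff]
  simp only [map_add, map_sum, pderiv_mul, pderiv_C, pderiv_X, Derivation.leibniz_pow,
    smul_eq_mul, map_mul, eval_C, eval_X, eval_pow, eval_add, eval_mul, map_pow,
    zero_mul, add_zero, zero_add, Pi.single_apply, mul_ite, mul_one, mul_zero, eval_zero,
    nsmul_eq_mul, Finset.mul_sum]
  congr 1
  · apply Finset.sum_congr rfl
    intro j _
    have hcs : j.castSucc ≠ j.succ := (Fin.castSucc_lt_succ : j.castSucc < j.succ).ne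
    by_cases h1 : i = j.castSucc <;> by_cases h2 : i = j.succ <;>
      simp [h1, h2, hcs, hcs.symm, eq_comm] <;> ring
  · by_cases h1 : i = Fin.last (n+1) <;> by_cases h2 : i = 0 <;>
      simp [h1, h2, hls, hls.symm, eq_comm] <;> ring

/-- For `n ≥ 1` and complex coefficients `c_0, …, c_{n+1}`, the polynomial
`F = ∑_{i=0}^{n} c_i x_i^2 x_{i+1} + c_{n+1} x_{n+1}^3 x_0` has a common zero of all its
partial derivatives in `ℂ^{n+2} ∖ {0}` if and only if some coefficient `c_i` is zero. -/
theorem loop_family_quasismooth_iff_coeffs_nonzero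
    (n : ℕ) (hn : 1 ≤ n)
    (c : Fin (n + 2) → ℂ)
    (F : MvPolynomial (Fin (n + 2)) ℂ)
    (hF : F = (∑ i : Fin (n + 1),
        MvPolynomial.C (c i.castSucc) * MvPolynomial.X i.castSucc ^ 2 * MvPolynomial.X i.succ)
      + MvPolynomial.C (c (Fin.last (n + 1))) * MvPolynomial.X (Fin.last (n + 1)) ^ 3 *
        MvPolynomial.X (0 : Fin (n + 2))) :
    (∃ x : Fin (n + 2) → ℂ, x ≠ 0 ∧
        ∀ i, MvPolynomial.eval x (MvPolynomial.pderiv i F) = 0) ↔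
      ∃ i, c i = 0 := by
  subst hF
  constructor
  · rintro ⟨x, hx0, hx⟩
    by_contra hc
    push_neg at hc
    have key : ∀ i, (∑ j : Fin (n+1), c j.castSucc *
        ((if i = j.castSucc then 2 * x j.castSucc * x j.succ else 0)
          + (if i = j.succ then x j.castSucc ^ 2 else 0)))
        + c (Fin.last (n+1)) * ((if i = Fin.last (n+1) then 3 * x (Fin.last (n+1)) ^ 2 * x 0 else 0)
          + (if i = 0 then x (Fin.last (n+1)) ^ 3 else 0)) = 0 := by
      intro i
      rw [← eval_pderiv_loop n c x i]
      exact hx i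
    have hne0last : (0 : Fin (n+2)) ≠ Fin.last (n+1) := by simp [Fin.ext_iff]
    -- equation from i = 0
    have E0 : c (0 : Fin (n+2)) * (2 * x 0 * x (1 : Fin (n+2)))
        + c (Fin.last (n+1)) * x (Fin.last (n+1)) ^ 3 = 0 := by
      have h := key 0
      rw [Finset.sum_congr rfl (g := fun j : Fin (n+1) =>
          if j = 0 then c (0 : Fin (n+2)) * (2 * x 0 * x (1 : Fin (n+2))) else 0)
        (fun j _ => by
          by_cases hj : j = 0
          · subst hj
            simp [(Fin.succ_ne_zero (0 : Fin (n+1))).symm]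
          · have h1 : ¬ (0 : Fin (n+2)) = j.castSucc := by
              rw [eq_comm, Fin.castSucc_eq_zero_iff]; exact hj
            simp [h1, hj, (Fin.succ_ne_zero j).symm])] at h
      simpa [hne0last] using h
    -- equation from i = (j.succ).castSucc, j : Fin n
    have EB : ∀ j : Fin n, c ((j.succ).castSucc) * (2 * x ((j.succ).castSucc) * x ((j.succ).succ))
        + c ((j.castSucc).castSucc) * x ((j.castSucc).castSucc) ^ 2 = 0 := by
      intro j
      have h := key ((j.succ).castSucc)
      have hcs : (j.castSucc : Fin (n+1)) ≠ j.succ := (Fin.castSucc_lt_succ : j.castSucc < j.succ).ne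
      rw [Finset.sum_congr rfl (g := fun j' : Fin (n+1) =>
          (if j' = j.succ then c ((j.succ).castSucc) * (2 * x ((j.succ).castSucc) * x ((j.succ).succ)) else 0)
          + (if j' = j.castSucc then c ((j.castSucc).castSucc) * x ((j.castSucc).castSucc) ^ 2 else 0))
        (fun j' _ => by
          by_cases h1 : j' = j.succ
          · subst h1
            simp [hcs, hcs.symm, (Fin.castSucc_lt_succ : (j.succ).castSucc < (j.succ).succ).ne]
          · by_cases h2 : j' = j.castSucc
            · subst h2
              have e1 : ((j.succ).castSucc : Fin (n+2)) = (j.castSucc).succ := rfl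
              have e2 : ¬ ((j.succ).castSucc : Fin (n+2)) = (j.castSucc).castSucc := by
                rw [Fin.castSucc_inj]; exact hcs.symm
              simp only [if_neg e2, if_pos e1]
              simp [hcs]
            · have e1 : ¬ ((j.succ).castSucc : Fin (n+2)) = j'.castSucc := by
                rw [Fin.castSucc_inj]; exact fun h' => h1 h'.symm
              have e2 : ¬ ((j.succ).castSucc : Fin (n+2)) = j'.succ := by
                rw [show ((j.succ).castSucc : Fin (n+2)) = (j.castSucc).succ from rfl]
                simp [Fin.succ_inj]; exact fun h' => h2 h'.symm
              simp only [if_neg e1, if_neg e2]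
              simp [h1, h2])] at h
      rw [Finset.sum_add_distrib] at h
      have hlast : ¬ ((j.succ).castSucc : Fin (n+2)) = Fin.last (n+1) :=
        (Fin.castSucc_lt_last _).ne
      have hzero : ¬ ((j.succ).castSucc : Fin (n+2)) = 0 := by
        rw [Fin.castSucc_eq_zero_iff]; exact Fin.succ_ne_zero j
      simpa [hlast, hzero, hcs] using h
    -- equation from i = last
    have EC : c ((Fin.last n).castSucc) * x ((Fin.last n).castSucc) ^ 2
        + c (Fin.last (n+1)) * (3 * x (Fin.last (n+1)) ^ 2 * x 0) = 0 := by
      have h := key (Fin.last (n+1))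
      rw [Finset.sum_congr rfl (g := fun j : Fin (n+1) =>
          if j = Fin.last n then c ((Fin.last n).castSucc) * x ((Fin.last n).castSucc) ^ 2 else 0)
        (fun j _ => by
          by_cases hj : j = Fin.last n
          · subst hj
            have e1 : ¬ (Fin.last (n+1) : Fin (n+2)) = (Fin.last n).castSucc :=
              ((Fin.castSucc_lt_last _).ne).symm
            rw [if_neg e1, if_pos (Fin.succ_last n).symm]
            simp
          · have e1 : ¬ (Fin.last (n+1) : Fin (n+2)) = j.castSucc :=
              ((Fin.castSucc_lt_last _).ne).symm
            have e2 : ¬ (Fin.last (n+1) : Fin (n+2)) = j.succ := by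
              rw [eq_comm, Fin.succ_eq_last_succ]; exact hj
            simp [e1, e2, hj])] at h
      simpa [hne0last.symm] using h
    -- the scalar argument
    set s : Fin (n+1) → ℂ := fun j => c j.castSucc * x j.castSucc ^ 2 * x j.succ with hsdef
    have hstep : ∀ j : Fin n, 2 * s j.succ + s j.castSucc = 0 := by
      intro j
      have e1 : ((j.castSucc).succ : Fin (n+2)) = (j.succ).castSucc := rfl
      rw [hsdef]
      simp only [e1]
      linear_combination x ((j.succ).castSucc) * EB j
    have hpow : ∀ j : Fin (n+1), s j = (-1/2 : ℂ) ^ (j : ℕ) * s 0 := by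
      intro j
      induction j using Fin.induction with
      | zero => simp
      | succ j ih =>
        have h2 : s j.succ = (-1/2 : ℂ) * s j.castSucc := by linear_combination (hstep j) / 2
        rw [h2, ih]
        simp [pow_succ]
        ring
    have hE0' : 2 * s 0 + c (Fin.last (n+1)) * x (Fin.last (n+1)) ^ 3 * x 0 = 0 := by
      rw [hsdef]
      simp only [Fin.castSucc_zero, Fin.succ_zero_eq_one]
      linear_combination x 0 * E0
    have hEC' : s (Fin.last n) + 3 * (c (Fin.last (n+1)) * x (Fin.last (n+1)) ^ 3 * x 0) = 0 := by
      rw [hsdef]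
      simp only [Fin.succ_last]
      linear_combination x (Fin.last (n+1)) * EC
    have hL : s (Fin.last n) = (-1/2 : ℂ) ^ n * s 0 := by
      simpa using hpow (Fin.last n)
    have hkey2 : ((-1/2 : ℂ) ^ n - 6) * s 0 = 0 := by
      linear_combination hEC' - hL - 3 * hE0'
    have hfac : ((-1/2 : ℂ) ^ n - 6) ≠ 0 := by
      intro h
      have h2 : ((-1/2 : ℂ)) ^ n = 6 := by linear_combination h
      have habs := congrArg norm h2
      rw [norm_pow] at habs
      have h3 : ‖(-1/2 : ℂ)‖ = 1/2 := by
        rw [show (-1/2 : ℂ) = -(1/2) by ring, norm_neg]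
        norm_num
      rw [h3] at habs
      have h4 : ((1:ℝ)/2) ^ n ≤ 1 := pow_le_one₀ (by norm_num) (by norm_num)
      have h5 : ‖(6 : ℂ)‖ = 6 := by norm_num
      rw [h5] at habs
      linarith
    have hs0 : s 0 = 0 := by
      rcases mul_eq_zero.mp hkey2 with h | h
      · exact absurd h hfac
      · exact h
    have hx01 : x 0 * x (1 : Fin (n+2)) = 0 := by
      rw [hsdef] at hs0
      simp only [Fin.castSucc_zero, Fin.succ_zero_eq_one] at hs0
      rcases mul_eq_zero.mp hs0 with h | h
      · rcases mul_eq_zero.mp h with h' | h'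
        · exact absurd h' (hc 0)
        · rw [pow_eq_zero_iff (two_ne_zero)] at h'
          rw [h', zero_mul]
      · rw [h, mul_zero]
    have hxlast : x (Fin.last (n+1)) = 0 := by
      have h : c (Fin.last (n+1)) * x (Fin.last (n+1)) ^ 3 = 0 := by
        linear_combination E0 - 2 * c (0 : Fin (n+2)) * hx01
      rcases mul_eq_zero.mp h with h' | h'
      · exact absurd h' (hc _)
      · exact pow_eq_zero_iff (three_ne_zero) |>.mp h'
    have hxn : x ((Fin.last n).castSucc) = 0 := by
      have h : c ((Fin.last n).castSucc) * x ((Fin.last n).castSucc) ^ 2 = 0 := by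
        rw [hxlast] at EC
        simpa using EC
      rcases mul_eq_zero.mp h with h' | h'
      · exact absurd h' (hc _)
      · exact pow_eq_zero_iff (two_ne_zero) |>.mp h'
    have hall : ∀ j : Fin (n+1), x j.castSucc = 0 := by
      intro j
      induction j using Fin.reverseInduction with
      | last => exact hxn
      | cast j ih =>
        have h : c ((j.castSucc).castSucc) * x ((j.castSucc).castSucc) ^ 2 = 0 := by
          linear_combination (EB j) - 2 * c ((j.succ).castSucc) * x ((j.succ).succ) * ih
        rcases mul_eq_zero.mp h with h' | h'
        · exact absurd h' (hc _)
        · exact pow_eq_zero_iff (two_ne_zero) |>.mp h'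
    apply hx0
    funext i
    rw [Pi.zero_apply]
    cases i using Fin.lastCases with
    | last => exact hxlast
    | cast j => exact hall j
  · rintro ⟨k, hk⟩
    refine ⟨Pi.single k 1, ?_, ?_⟩
    · intro h
      have := congrFun h k
      simp at this
    · intro i
      rw [eval_pderiv_loop n c (Pi.single k 1) i]
      rw [Finset.sum_eq_zero, zero_add]
      · by_cases hk1 : Fin.last (n+1) = k
        · simp [← hk1] at hk
          simp [hk]
        · simp [Pi.single_apply, hk1]
      · intro j _
        have hcs : (j.castSucc : Fin (n+2)) ≠ j.succ := (Fin.castSucc_lt_succ : j.castSucc < j.succ).ne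
        by_cases hk1 : (j.castSucc : Fin (n+2)) = k
        · by_cases hk2 : (j.succ : Fin (n+2)) = k
          · exact absurd (hk1.trans hk2.symm) hcs
          · simp [← hk1] at hk
            simp [hk]
        · simp [Pi.single_apply, hk1]
end

section
/- For n = 7, the terminality criterion fails for the loop exponents (2, 2, …, 2, 3): there exist a cyclic permutation (b_0, b_1, …, b_8) of the 9-tuple (2, 2, 2, 2, 2, 2, 2, 2, 3) and a real number x with 0 < x < 1 such that Σ_{j=2}^{8} [β_j x] ≤ 1, where β_j := 1 − b_{j-1} + b_{j-1}b_{j-2} − ⋯ + (−1)^{j-1} b_{j-1}b_{j-2}⋯b_1 and [y] denotes the fractional part y − ⌊y⌋. -/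
/-- For `n = 7`, the Reid–Tai-type criterion fails for the loop exponents
`(2, …, 2, 3)`: there is a cyclic permutation `(b_0, …, b_8)` of the 9-tuple
`(2, 2, 2, 2, 2, 2, 2, 2, 3)` and a real `x ∈ (0, 1)` with `∑_{j=2}^{8} [β_j x] ≤ 1`,
where `β_j = ∑_{s=0}^{j-1} (-1)^s b_{j-1} b_{j-2} ⋯ b_{j-s}` and `[y]` is the fractional
part of `y`. -/
theorem reid_tai_criterion_fails_dim_seven :
    ∃ (k : ℕ) (x : ℝ), 0 < x ∧ x < 1 ∧
      ∑ j ∈ Finset.Icc 2 8,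
          Int.fract
            (((∑ s ∈ Finset.range j, (-1 : ℤ) ^ s *
                ∏ t ∈ Finset.range s,
                  (if (j - 1 - t + k) % 9 = 8 then (3 : ℤ) else 2)) : ℤ) * x) ≤ 1 := by
  refine ⟨7, 3/7, by norm_num, by norm_num, ?_⟩
  have key : ∀ m : ℤ, Int.fract ((m : ℝ) + 1/7) = 1/7 := by
    intro m
    rw [add_comm, Int.fract_add_intCast, Int.fract_eq_self.2 ⟨by norm_num, by norm_num⟩]
  rw [show Finset.Icc 2 8 = ({2,3,4,5,6,7,8} : Finset ℕ) from rfl]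
  rw [Finset.sum_insert (by decide), Finset.sum_insert (by decide),
    Finset.sum_insert (by decide), Finset.sum_insert (by decide),
    Finset.sum_insert (by decide), Finset.sum_insert (by decide),
    Finset.sum_singleton]
  simp only [Finset.sum_range_succ, Finset.sum_range_zero, Finset.prod_range_succ,
    Finset.prod_range_zero]
  norm_num
end

section
/- Let m ≥ 2 and let B be an m×m integer matrix with det B ≠ 0. Let v := (1, 1, …, 1) ∈ ℤ^m, let q := B^{-1}·v ∈ ℚ^m, and let d be the least positive integer such that d·q has all integer entries. Then the subgroup of ℤ^m generated by the m columns of B together with the vector v equals all of ℤ^m if and only if d = |det B|. -/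
open Matrix Submodule Set

lemma quot_range_card {m : ℕ} (B : Matrix (Fin m) (Fin m) ℤ) (hB : B.det ≠ 0) :
    Finite ((Fin m → ℤ) ⧸ LinearMap.range (Matrix.toLin' B)) ∧
    Nat.card ((Fin m → ℤ) ⧸ LinearMap.range (Matrix.toLin' B)) = B.det.natAbs := by
  classical
  set N := LinearMap.range (Matrix.toLin' B) with hNdef
  have hinj : Function.Injective (Matrix.toLin' B) := by
    rw [← LinearMap.ker_eq_bot, Matrix.ker_toLin'_eq_bot_iff]
    intro x hx
    by_contra hx0
    exact hB (Matrix.exists_mulVec_eq_zero_iff.mp ⟨x, hx0, hx⟩)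
  let e₀ : (Fin m → ℤ) ≃ₗ[ℤ] N := LinearEquiv.ofInjective _ hinj
  obtain ⟨n, bM, bN, f, a, hsnf⟩ := N.smithNormalForm (Pi.basisFun ℤ (Fin m))
  have hn : n = m := by
    have h1 : Module.finrank ℤ N = n := by
      simpa using Module.finrank_eq_card_basis bN
    have h2 : Module.finrank ℤ N = m := by
      rw [← e₀.finrank_eq]
      simp [Module.finrank_fintype_fun_eq_card]
    omega
  subst hn
  have hg : Function.Bijective f := Finite.injective_iff_bijective.mp f.injective
  let g : Fin n ≃ Fin n := Equiv.ofBijective f hg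
  have hfg : ∀ i, f i = g i := fun i => rfl
  have ha : ∀ i, a i ≠ 0 := by
    intro i h
    apply bN.ne_zero i
    have h2 := hsnf i
    rw [h, zero_smul] at h2
    exact Subtype.coe_injective (by simpa using h2)
  -- sum computation
  have hsum : ∀ c : Fin n → ℤ, ∀ j,
      bM.repr (∑ i, c i • (bN i : Fin n → ℤ)) j = a (g.symm j) * c (g.symm j) := by
    intro c j
    have : ∑ i, c i • (bN i : Fin n → ℤ)
        = ∑ j, (a (g.symm j) * c (g.symm j)) • bM j := by
      rw [← Equiv.sum_comp g (fun j => (a (g.symm j) * c (g.symm j)) • bM j)]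
      refine Finset.sum_congr rfl fun i _ => ?_
      rw [hsnf i, hfg i, Equiv.symm_apply_apply, smul_smul, mul_comm]
    rw [this, bM.repr_sum_self]
  have mem_N_iff : ∀ x : Fin n → ℤ, x ∈ N ↔ ∀ i, a i ∣ bM.repr x (f i) := by
    intro x
    have hNspan : x ∈ N ↔ x ∈ span ℤ (Set.range fun i => (bN i : Fin n → ℤ)) := by
      conv_lhs => rw [← Submodule.map_subtype_top N, ← bN.span_eq, Submodule.map_span]
      rw [← Set.range_comp]
      rfl
    rw [hNspan, mem_span_range_iff_exists_fun]
    constructor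
    · rintro ⟨c, rfl⟩ i
      exact ⟨c i, by rw [hsum c (f i), hfg i, Equiv.symm_apply_apply]⟩
    · intro h
      choose c hc using h
      refine ⟨c, bM.ext_elem fun j => ?_⟩
      rw [hsum c j]
      have := hc (g.symm j)
      rw [hfg, Equiv.apply_symm_apply] at this
      rw [this, mul_comm]
  -- map to the pi submodule
  let I' : Submodule ℤ (Fin n → ℤ) :=
    Submodule.pi Set.univ fun j => Ideal.span ({a (g.symm j)} : Set ℤ)
  have hmap : Submodule.map (bM.equivFun : (Fin n → ℤ) →ₗ[ℤ] (Fin n → ℤ)) N = I' := by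
    ext x
    simp only [I', Submodule.mem_map, Submodule.mem_pi, Set.mem_univ, forall_true_left,
      Ideal.mem_span_singleton, LinearEquiv.coe_coe, Module.Basis.equivFun_apply]
    constructor
    · rintro ⟨y, hy, rfl⟩ j
      have := (mem_N_iff y).mp hy (g.symm j)
      rwa [hfg, Equiv.apply_symm_apply] at this
    · intro h
      have hrepr : ∀ j, bM.repr (bM.equivFun.symm x) j = x j := by
        intro j
        rw [← Module.Basis.equivFun_apply, LinearEquiv.apply_symm_apply]
      refine ⟨bM.equivFun.symm x, ?_, funext hrepr⟩
      rw [mem_N_iff]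
      intro i
      rw [hrepr (f i)]
      have := h (f i)
      rwa [hfg i, Equiv.symm_apply_apply] at this
  let eq1 : ((Fin n → ℤ) ⧸ N) ≃ₗ[ℤ] ((Fin n → ℤ) ⧸ I') :=
    Submodule.Quotient.equiv N I' bM.equivFun hmap
  let eq2 : ((Fin n → ℤ) ⧸ I') ≃ₗ[ℤ] ∀ j, ℤ ⧸ Ideal.span ({a (g.symm j)} : Set ℤ) :=
    Submodule.quotientPi _
  let eq3 : (∀ j, ℤ ⧸ Ideal.span ({a (g.symm j)} : Set ℤ)) ≃+
      ∀ j, ZMod (a (g.symm j)).natAbs :=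
    AddEquiv.piCongrRight fun j => (Int.quotientSpanEquivZMod (a (g.symm j))).toAddEquiv
  have efull : ((Fin n → ℤ) ⧸ N) ≃ (∀ j, ZMod (a (g.symm j)).natAbs) :=
    (eq1.toEquiv.trans eq2.toEquiv).trans eq3.toEquiv
  have hNZ : ∀ j : Fin n, NeZero (a (g.symm j)).natAbs :=
    fun j => ⟨Int.natAbs_ne_zero.mpr (ha _)⟩
  have hfin : Finite ((Fin n → ℤ) ⧸ N) := by
    haveI := hNZ
    exact Finite.of_equiv _ efull.symm
  refine ⟨hfin, ?_⟩
  -- cardinality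
  have hcard1 : Nat.card ((Fin n → ℤ) ⧸ N) = ∏ i, (a i).natAbs := by
    rw [Nat.card_congr efull]
    haveI := hNZ
    rw [Nat.card_pi]
    rw [← Equiv.prod_comp g.symm (fun i => (a i).natAbs)]
    refine Finset.prod_congr rfl fun j _ => ?_
    haveI := hNZ j
    simp [Nat.card_eq_fintype_card, ZMod.card]
  rw [hcard1]
  -- determinant comparison
  have hprod : (∏ i, (a i).natAbs) = B.det.natAbs := by
    let e' : (Fin n → ℤ) ≃ₗ[ℤ] N := bM.equiv bN (Equiv.refl _)
    let F' : (Fin n → ℤ) →ₗ[ℤ] (Fin n → ℤ) := N.subtype ∘ₗ (e' : (Fin n → ℤ) →ₗ[ℤ] N)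
    have hMx : LinearMap.toMatrix bM bM F' = (Matrix.diagonal a).submatrix g.symm id := by
      ext j i
      rw [LinearMap.toMatrix_apply]
      have hF' : F' (bM i) = a i • bM (f i) := by
        simp only [F', e', LinearMap.comp_apply, LinearEquiv.coe_coe, Module.Basis.equiv_apply,
          Equiv.refl_apply, Submodule.coe_subtype]
        exact hsnf i
      rw [hF', LinearEquiv.map_smul, bM.repr_self, Finsupp.smul_single, smul_eq_mul, mul_one,
        Finsupp.single_apply, Matrix.submatrix_apply, Matrix.diagonal_apply, id_eq]
      by_cases h : g.symm j = i
      · have hfij : f i = j := by rw [hfg, ← h, Equiv.apply_symm_apply]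
        simp [h, hfij]
      · have hfij : f i ≠ j := by
          intro hc
          exact h (by rw [← hc, hfg, Equiv.symm_apply_apply])
        simp [h, hfij]
    have hdetF' : (LinearMap.det F').natAbs = (∏ i, a i).natAbs := by
      rw [← LinearMap.det_toMatrix bM F', hMx]
      have : ((Matrix.diagonal a).submatrix (g.symm : Fin n → Fin n) id).det
          = Equiv.Perm.sign g.symm • (Matrix.diagonal a).det := by
        exact Matrix.det_permute g.symm (Matrix.diagonal a)
      rw [this, Matrix.det_diagonal]
      rcases Int.units_eq_one_or (Equiv.Perm.sign g.symm) with h | h <;>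
        simp [h, Int.natAbs_neg]
    have hFeq : Matrix.toLin' B = F' ∘ₗ ((e₀.trans e'.symm) : (Fin n → ℤ) →ₗ[ℤ] (Fin n → ℤ)) := by
      ext x
      simp only [F', LinearMap.comp_apply, LinearEquiv.coe_coe, LinearEquiv.trans_apply,
        Submodule.coe_subtype, LinearEquiv.apply_symm_apply]
      rfl
    have hdetB : B.det.natAbs = (LinearMap.det F').natAbs := by
      have h1 : LinearMap.det (Matrix.toLin' B) = B.det := LinearMap.det_toLin' B
      have h2 : IsUnit (LinearMap.det ((e₀.trans e'.symm) :
          (Fin n → ℤ) →ₗ[ℤ] (Fin n → ℤ))) := LinearEquiv.isUnit_det' _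
      rw [← h1, hFeq, LinearMap.det_comp, Int.natAbs_mul]
      rcases Int.isUnit_iff.mp h2 with h | h <;> simp [h]
    rw [hdetB, hdetF']
    exact (map_prod Int.natAbsHom a Finset.univ).symm
  exact hprod

/-- Let `m ≥ 2` and `B` an `m × m` integer matrix with `det B ≠ 0`.
Let `v = (1, …, 1) ∈ ℤ^m`, `q = B⁻¹ · v ∈ ℚ^m`, and `d` the least positive integer such
that `d·q` has all integer entries. Then the subgroup of `ℤ^m` generated by the columns of
`B` together with `v` is all of `ℤ^m` if and only if `d = |det B|`. -/
theorem delsarte_columns_generate_iff_degree_eq_det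
    (m : ℕ) (hm : 2 ≤ m)
    (B : Matrix (Fin m) (Fin m) ℤ) (hB : B.det ≠ 0)
    (v : Fin m → ℤ) (hv : v = fun _ => 1)
    (q : Fin m → ℚ)
    (hq : q = ((B.map (Int.cast : ℤ → ℚ))⁻¹).mulVec (fun j => (v j : ℚ)))
    (d : ℕ) (hd0 : 0 < d)
    (hdint : ∀ j, ∃ z : ℤ, (d : ℚ) * q j = (z : ℚ))
    (hdmin : ∀ d' : ℕ, 0 < d' → (∀ j, ∃ z : ℤ, (d' : ℚ) * q j = (z : ℚ)) → d ≤ d') :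
    Submodule.span ℤ ((Set.range fun j => B.transpose j) ∪ {v}) = ⊤ ↔
      (d : ℤ) = |B.det| := by
  classical
  set Bq := B.map (Int.cast : ℤ → ℚ) with hBqdef
  have hBqdet : Bq.det = (B.det : ℚ) := (RingHom.map_det (Int.castRingHom ℚ) B).symm
  have hBqu : IsUnit Bq.det := by
    rw [hBqdet]
    exact isUnit_iff_ne_zero.mpr (by exact_mod_cast hB)
  have hvq : (fun j => ((v j : ℚ))) = fun _ => (1 : ℚ) := by
    funext j; rw [hv]; norm_num
  have hcast : ∀ x : Fin m → ℤ, (fun j => ((B.mulVec x j : ℤ) : ℚ)) =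
      Bq.mulVec (fun j => (x j : ℚ)) := by
    intro x
    funext j
    simp only [Matrix.mulVec, dotProduct, hBqdef, Matrix.map_apply]
    push_cast
    rfl
  have hBqq : Bq.mulVec q = fun _ => (1 : ℚ) := by
    rw [hq, Matrix.mulVec_mulVec, Matrix.mul_nonsing_inv Bq hBqu, Matrix.one_mulVec, hvq]
  set N := LinearMap.range (Matrix.toLin' B) with hNdef
  -- the key equivalence
  have key : ∀ n : ℕ, (∀ j, ∃ z : ℤ, (n : ℚ) * q j = (z : ℚ)) ↔
      (fun _ => (n : ℤ)) ∈ N := by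
    intro n
    constructor
    · intro h
      choose z hz using h
      refine ⟨z, ?_⟩
      rw [Matrix.toLin'_apply]
      funext j
      have : ((B.mulVec z j : ℤ) : ℚ) = (n : ℚ) := by
        have h1 := congrFun (hcast z) j
        have h2 : (fun j => (z j : ℚ)) = (n : ℚ) • q := by
          funext k; rw [Pi.smul_apply, smul_eq_mul, ← hz k]
        rw [h1, h2, Matrix.mulVec_smul, hBqq]
        simp
      exact_mod_cast this
    · rintro ⟨x, hx⟩
      rw [Matrix.toLin'_apply] at hx
      intro j
      refine ⟨x j, ?_⟩
      have h1 : (fun j => ((B.mulVec x j : ℤ) : ℚ)) = fun _ => (n : ℚ) := by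
        funext k; rw [hx]; norm_num
      have h2 : Bq.mulVec (fun j => (x j : ℚ)) = fun _ => (n : ℚ) := by
        rw [← hcast x, h1]
      have h3 : (n : ℚ) • q = fun j => (x j : ℚ) := by
        calc (n : ℚ) • q = Bq⁻¹ *ᵥ ((n : ℚ) • fun j => ((v j : ℚ))) := by
              rw [hq, Matrix.mulVec_smul]
          _ = Bq⁻¹ *ᵥ (Bq *ᵥ fun j => (x j : ℚ)) := by
              rw [h2, hvq]
              have harg : ((n : ℚ) • fun _ : Fin m => (1 : ℚ)) = fun _ : Fin m => (n : ℚ) := by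
                funext k
                rw [Pi.smul_apply, smul_eq_mul, mul_one]
              rw [harg]
          _ = fun j => (x j : ℚ) := by
              rw [Matrix.mulVec_mulVec, Matrix.nonsing_inv_mul Bq hBqu, Matrix.one_mulVec]
      have := congrFun h3 j
      rw [Pi.smul_apply, smul_eq_mul] at this
      exact this
  obtain ⟨hfin, hcardQ⟩ := quot_range_card B hB
  haveI : Finite ((Fin m → ℤ) ⧸ N) := hfin
  set w : (Fin m → ℤ) ⧸ N := N.mkQ v with hwdef
  -- order of w is d
  have hnsmul : ∀ n : ℕ, (n • w = 0 ↔ (fun _ => (n : ℤ)) ∈ N) := by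
    intro n
    rw [hwdef, ← map_nsmul, Submodule.mkQ_apply, Submodule.Quotient.mk_eq_zero]
    have : n • v = fun _ => (n : ℤ) := by
      funext j; rw [hv]; simp
    rw [this]
  have horder : addOrderOf w = d := by
    have hdw : d • w = 0 := (hnsmul d).mpr ((key d).mp hdint)
    have hop : 0 < addOrderOf w := addOrderOf_pos w
    have h1 : addOrderOf w ≤ d :=
      Nat.le_of_dvd hd0 (addOrderOf_dvd_of_nsmul_eq_zero hdw)
    have h2 : d ≤ addOrderOf w := by
      refine hdmin _ hop ((key _).mpr ?_)
      exact (hnsmul _).mp (addOrderOf_nsmul_eq_zero w)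
    omega
  -- rewrite the span condition
  have hspan : Submodule.span ℤ ((Set.range fun j => B.transpose j) ∪ {v}) = ⊤ ↔
      Submodule.span ℤ {w} = ⊤ := by
    rw [Submodule.span_union]
    have hr : Submodule.span ℤ (Set.range fun j => B.transpose j) = N := by
      rw [hNdef, Matrix.range_toLin']
      rfl
    rw [hr, ← Submodule.map_mkQ_eq_top, Submodule.map_span, Set.image_singleton]
  -- cardinality of span {w}
  have hcardP : Nat.card (Submodule.span ℤ {w}) = d := by
    have hset : ((Submodule.span ℤ {w} : Submodule ℤ _) : Set _) =
        ((AddSubgroup.zmultiples w : AddSubgroup ((Fin m → ℤ) ⧸ N)) :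
          Set ((Fin m → ℤ) ⧸ N)) := by
      ext x
      simp [Submodule.mem_span_singleton, AddSubgroup.mem_zmultiples_iff]
    have h1 : Nat.card (Submodule.span ℤ {w}) = Nat.card (AddSubgroup.zmultiples w) :=
      Nat.card_congr (Equiv.setCongr hset)
    rw [h1, Nat.card_zmultiples, horder]
  have hcard_iff : Submodule.span ℤ {w} = ⊤ ↔ d = B.det.natAbs := by
    constructor
    · intro h
      rw [← hcardP, ← hcardQ, h]
      exact Nat.card_congr Submodule.topEquiv.toEquiv
    · intro h
      have hQ0 : Nat.card ((Fin m → ℤ) ⧸ N) ≠ 0 := by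
        rw [hcardQ]
        exact Int.natAbs_ne_zero.mpr hB
      have hmul := Submodule.card_eq_card_quotient_mul_card (Submodule.span ℤ {w})
      rw [hcardP, h, ← hcardQ] at hmul
      have h1 : Nat.card (((Fin m → ℤ) ⧸ N) ⧸ Submodule.span ℤ {w}) = 1 := by
        rcases Nat.eq_zero_or_pos (Nat.card (((Fin m → ℤ) ⧸ N) ⧸ Submodule.span ℤ {w}))
          with h0 | hpos
        · rw [h0, mul_zero] at hmul; exact absurd hmul hQ0
        · nlinarith [hmul, Nat.pos_of_ne_zero hQ0]
      have := (Nat.card_eq_one_iff_unique.mp h1).1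
      exact Submodule.Quotient.subsingleton_iff.mp this
  rw [hspan, hcard_iff, Int.abs_eq_natAbs]
  exact_mod_cast Iff.rfl
end
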